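/- The quasi-shuffle product is associative: for all words w1, w2, w3 in k⟨A⟩, (w1 * w2) * w3 = w1 * (w2 * w3). -/
import Mathlib


open Finsupp Classical

noncomputable section

variable {A : Type} 

/-- The word `w` as a basis element of the free module `k⟨A⟩`. -/
def sing (k : Type) [Field k] (w : List A) : List A →₀ k := Finsupp.single w 1

/-- Left multiplication of a linear combination of words by a letter. -/
def consF (k : Type) [Field k] (a : A) (f : List A →₀ k) : List A →₀ k :=
  f.mapDomain (List.cons a)

/-- Left multiplication by an element of `A ∪ {0}` (with `none` playing the role of `0`). -/
def oconsF (k : Type) [Field k] : Option A → (List A →₀ k) → (List A →₀ k)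
  | none, _ => 0
  | Option.some a, f => consF k a f

/-- The quasi-shuffle product of two words, with structure operation `br : A → A → Option A`
(`none` = 0):  `1*w = w*1 = w` and
`aw₁ * bw₂ = a(w₁*bw₂) + b(aw₁*w₂) + [a,b](w₁*w₂)`. -/
def qsh (k : Type) [Field k] (br : A → A → Option A) : List A → List A → (List A →₀ k)
  | [], w => sing k w
  | a :: u, [] => sing k (a :: u)
  | a :: u, b :: v =>
      consF k a (qsh k br u (b :: v)) + consF k b (qsh k br (a :: u) v)
        + oconsF k (br a b) (qsh k br u v)
  termination_by w1 w2 => w1.length + w2.length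

/-- Linear extension of a map defined on words. -/
def liftOne (k : Type) [Field k] {α β : Type} (f : α → (β →₀ k)) : (α →₀ k) → (β →₀ k) :=
  fun x => x.sum fun u c => c • f u

/-- Bilinear extension of a product defined on words. -/
def liftTwo (k : Type) [Field k] {α β : Type} (f : α → α → (β →₀ k)) :
    (α →₀ k) → (α →₀ k) → (β →₀ k) :=
  fun x y => x.sum fun u cu => y.sum fun v cv => (cu * cv) • f u v

/-- The degree of a word: the sum of the degrees of its letters. -/
def degW (deg : A → ℕ) (w : List A) : ℕ := (w.map deg).sum

/-- The iterated bracket `[S]` of a nonempty sequence of letters (`none` = 0). -/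
def brS (br : A → A → Option A) : List A → Option A
  | [] => none
  | [a] => some a
  | a :: b :: w => (brS br (b :: w)).bind (br a)

/-- The contraction `I[w]` of the word `w` along the composition with list of parts `I`:
consecutive blocks of `w` of lengths given by `I` are contracted via the iterated bracket;
the result is `0` if some bracket vanishes. -/
def contract (k : Type) [Field k] (br : A → A → Option A) : List ℕ → List A → (List A →₀ k)
  | [], w => (match w with | [] => sing k [] | _ => 0)
  | i :: I, w => oconsF k (brS br (w.take i)) (contract k br I (w.drop i))

end

section Aux
variable {A k : Type} [Field k]

lemma consF_add (a : A) (x y : List A →₀ k) : consF k a (x + y) = consF k a x + consF k a y :=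
  Finsupp.mapDomain_add

lemma consF_zero (a : A) : consF k a (0 : List A →₀ k) = 0 := Finsupp.mapDomain_zero

lemma consF_smul (a : A) (c : k) (x : List A →₀ k) : consF k a (c • x) = c • consF k a x :=
  Finsupp.mapDomain_smul _ _

lemma oconsF_add (e : Option A) (x y : List A →₀ k) :
    oconsF k e (x + y) = oconsF k e x + oconsF k e y := by
  cases e <;> simp [oconsF, consF_add]

lemma oconsF_zero (e : Option A) : oconsF k e (0 : List A →₀ k) = 0 := by
  cases e <;> simp [oconsF, consF_zero]

lemma oconsF_smul (e : Option A) (c : k) (x : List A →₀ k) :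
    oconsF k e (c • x) = c • oconsF k e x := by
  cases e <;> simp [oconsF, consF_smul]

lemma qsh_nil_left (br : A → A → Option A) (w : List A) : qsh k br [] w = sing k w := by
  rw [qsh]

lemma qsh_nil_right (br : A → A → Option A) (w : List A) : qsh k br w [] = sing k w := by
  cases w <;> rw [qsh]

lemma qsh_cons_cons (br : A → A → Option A) (a b : A) (u v : List A) :
    qsh k br (a :: u) (b :: v) =
      consF k a (qsh k br u (b :: v)) + consF k b (qsh k br (a :: u) v)
        + oconsF k (br a b) (qsh k br u v) := by
  rw [qsh]

lemma liftTwo_sing_right (f : List A → List A → (List A →₀ k)) (x : List A →₀ k) (v : List A) :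
    liftTwo k f x (sing k v) = x.sum fun u cu => cu • f u v := by
  unfold liftTwo sing
  refine Finsupp.sum_congr fun u _ => ?_
  rw [Finsupp.sum_single_index] <;> simp

lemma liftTwo_sing_left (f : List A → List A → (List A →₀ k)) (u : List A) (y : List A →₀ k) :
    liftTwo k f (sing k u) y = y.sum fun v cv => cv • f u v := by
  unfold liftTwo sing
  rw [Finsupp.sum_single_index]
  · simp
  · simp

lemma liftTwo_sing_sing (f : List A → List A → (List A →₀ k)) (u v : List A) :
    liftTwo k f (sing k u) (sing k v) = f u v := by
  rw [liftTwo_sing_left, sing, Finsupp.sum_single_index] <;> simp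

lemma liftTwo_add_left (f : List A → List A → (List A →₀ k)) (x x' y : List A →₀ k) :
    liftTwo k f (x + x') y = liftTwo k f x y + liftTwo k f x' y := by
  unfold liftTwo
  rw [Finsupp.sum_add_index']
  · intro u; simp
  · intro u c c'
    rw [← Finsupp.sum_add]
    refine Finsupp.sum_congr fun v _ => ?_
    rw [add_mul, add_smul]

lemma liftTwo_add_right (f : List A → List A → (List A →₀ k)) (x y y' : List A →₀ k) :
    liftTwo k f x (y + y') = liftTwo k f x y + liftTwo k f x y' := by
  unfold liftTwo
  rw [← Finsupp.sum_add]
  refine Finsupp.sum_congr fun u _ => ?_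
  rw [Finsupp.sum_add_index']
  · intro v; simp
  · intro v c c'; rw [mul_add, add_smul]

lemma liftTwo_zero_left (f : List A → List A → (List A →₀ k)) (y : List A →₀ k) :
    liftTwo k f 0 y = 0 := Finsupp.sum_zero_index

lemma liftTwo_zero_right (f : List A → List A → (List A →₀ k)) (x : List A →₀ k) :
    liftTwo k f x 0 = 0 := by
  unfold liftTwo; simp

lemma sum_consF (a : A) (x : List A →₀ k) (g : List A → k → (List A →₀ k)) :
    (x.sum fun u c => consF k a (g u c)) = consF k a (x.sum g) := by
  unfold consF
  rw [Finsupp.mapDomain_sum]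

lemma sum_oconsF (e : Option A) (x : List A →₀ k) (g : List A → k → (List A →₀ k)) :
    (x.sum fun u c => oconsF k e (g u c)) = oconsF k e (x.sum g) := by
  cases e
  · simp [oconsF]
  · simp only [oconsF]; exact sum_consF _ _ _

lemma sum_smul_sing (y : List A →₀ k) : (y.sum fun v c => c • sing k v) = y := by
  conv_rhs => rw [← y.sum_single]
  refine Finsupp.sum_congr fun v _ => ?_
  rw [sing, Finsupp.smul_single, smul_eq_mul, mul_one]

end Aux

section Aux2
variable {A k : Type} [Field k] (br : A → A → Option A)

lemma liftTwo_consF_sing (f : List A → List A → (List A →₀ k)) (a : A) (x : List A →₀ k)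
    (v : List A) :
    liftTwo k f (consF k a x) (sing k v) = x.sum fun u cu => cu • f (a :: u) v := by
  rw [liftTwo_sing_right]
  exact Finsupp.sum_mapDomain_index (fun u => by simp) (fun u c c' => by rw [add_smul])

lemma liftTwo_sing_consF (f : List A → List A → (List A →₀ k)) (u : List A) (b : A)
    (y : List A →₀ k) :
    liftTwo k f (sing k u) (consF k b y) = y.sum fun v cv => cv • f u (b :: v) := by
  rw [liftTwo_sing_left]
  exact Finsupp.sum_mapDomain_index (fun v => by simp) (fun v c c' => by rw [add_smul])

lemma L_consF_left (a c : A) (x : List A →₀ k) (w : List A) :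
    liftTwo k (qsh k br) (consF k a x) (sing k (c :: w)) =
      consF k a (liftTwo k (qsh k br) x (sing k (c :: w)))
        + consF k c (liftTwo k (qsh k br) (consF k a x) (sing k w))
        + oconsF k (br a c) (liftTwo k (qsh k br) x (sing k w)) := by
  rw [liftTwo_consF_sing]
  calc (x.sum fun u cu => cu • qsh k br (a :: u) (c :: w))
      = x.sum (fun u cu => consF k a (cu • qsh k br u (c :: w))
          + consF k c (cu • qsh k br (a :: u) w)
          + oconsF k (br a c) (cu • qsh k br u w)) := by
        refine Finsupp.sum_congr fun u _ => ?_
        rw [qsh_cons_cons, smul_add, smul_add, consF_smul, consF_smul, oconsF_smul]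
    _ = (x.sum fun u cu => consF k a (cu • qsh k br u (c :: w)))
          + (x.sum fun u cu => consF k c (cu • qsh k br (a :: u) w))
          + (x.sum fun u cu => oconsF k (br a c) (cu • qsh k br u w)) := by
        rw [Finsupp.sum_add, Finsupp.sum_add]
    _ = _ := by
        rw [sum_consF, sum_consF, sum_oconsF, ← liftTwo_consF_sing, ← liftTwo_sing_right,
          ← liftTwo_sing_right]

lemma L_oconsF_left (e : Option A) (c : A) (x : List A →₀ k) (w : List A) :
    liftTwo k (qsh k br) (oconsF k e x) (sing k (c :: w)) =
      oconsF k e (liftTwo k (qsh k br) x (sing k (c :: w)))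
        + consF k c (liftTwo k (qsh k br) (oconsF k e x) (sing k w))
        + oconsF k (e.bind fun d => br d c) (liftTwo k (qsh k br) x (sing k w)) := by
  cases e with
  | none => simp [oconsF, liftTwo_zero_left, consF_zero]
  | some d => simpa [oconsF] using L_consF_left br d c x w

lemma L_consF_right (a b : A) (u : List A) (y : List A →₀ k) :
    liftTwo k (qsh k br) (sing k (a :: u)) (consF k b y) =
      consF k a (liftTwo k (qsh k br) (sing k u) (consF k b y))
        + consF k b (liftTwo k (qsh k br) (sing k (a :: u)) y)
        + oconsF k (br a b) (liftTwo k (qsh k br) (sing k u) y) := by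
  rw [liftTwo_sing_consF]
  calc (y.sum fun v cv => cv • qsh k br (a :: u) (b :: v))
      = y.sum (fun v cv => consF k a (cv • qsh k br u (b :: v))
          + consF k b (cv • qsh k br (a :: u) v)
          + oconsF k (br a b) (cv • qsh k br u v)) := by
        refine Finsupp.sum_congr fun v _ => ?_
        rw [qsh_cons_cons, smul_add, smul_add, consF_smul, consF_smul, oconsF_smul]
    _ = (y.sum fun v cv => consF k a (cv • qsh k br u (b :: v)))
          + (y.sum fun v cv => consF k b (cv • qsh k br (a :: u) v))
          + (y.sum fun v cv => oconsF k (br a b) (cv • qsh k br u v)) := by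
        rw [Finsupp.sum_add, Finsupp.sum_add]
    _ = _ := by
        rw [sum_consF, sum_consF, sum_oconsF, ← liftTwo_sing_consF, ← liftTwo_sing_left,
          ← liftTwo_sing_left]

lemma L_oconsF_right (a : A) (u : List A) (e : Option A) (y : List A →₀ k) :
    liftTwo k (qsh k br) (sing k (a :: u)) (oconsF k e y) =
      consF k a (liftTwo k (qsh k br) (sing k u) (oconsF k e y))
        + oconsF k e (liftTwo k (qsh k br) (sing k (a :: u)) y)
        + oconsF k (e.bind (br a)) (liftTwo k (qsh k br) (sing k u) y) := by
  cases e with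
  | none => simp [oconsF, liftTwo_zero_right, consF_zero]
  | some d => simpa [oconsF] using L_consF_right br a d u y

end Aux2

section Assoc
variable {A k : Type} [Field k]

lemma L_qsh_sing_expand (br : A → A → Option A) (a b c : A) (u v w : List A) :
    liftTwo k (qsh k br) (qsh k br (a :: u) (b :: v)) (sing k (c :: w)) =
      consF k a (liftTwo k (qsh k br) (qsh k br u (b :: v)) (sing k (c :: w)))
        + consF k b (liftTwo k (qsh k br) (qsh k br (a :: u) v) (sing k (c :: w)))
        + oconsF k (br a b) (liftTwo k (qsh k br) (qsh k br u v) (sing k (c :: w)))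
        + consF k c (liftTwo k (qsh k br) (qsh k br (a :: u) (b :: v)) (sing k w))
        + oconsF k (br a c) (liftTwo k (qsh k br) (qsh k br u (b :: v)) (sing k w))
        + oconsF k (br b c) (liftTwo k (qsh k br) (qsh k br (a :: u) v) (sing k w))
        + oconsF k ((br a b).bind fun d => br d c)
            (liftTwo k (qsh k br) (qsh k br u v) (sing k w)) := by
  conv_lhs => rw [qsh_cons_cons br a b u v]
  rw [liftTwo_add_left, liftTwo_add_left, L_consF_left, L_consF_left, L_oconsF_left]
  conv_rhs =>
    rw [qsh_cons_cons br a b u v, liftTwo_add_left, liftTwo_add_left, consF_add, consF_add]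
  abel

lemma L_sing_qsh_expand (br : A → A → Option A) (a b c : A) (u v w : List A) :
    liftTwo k (qsh k br) (sing k (a :: u)) (qsh k br (b :: v) (c :: w)) =
      consF k a (liftTwo k (qsh k br) (sing k u) (qsh k br (b :: v) (c :: w)))
        + consF k b (liftTwo k (qsh k br) (sing k (a :: u)) (qsh k br v (c :: w)))
        + oconsF k (br a b) (liftTwo k (qsh k br) (sing k u) (qsh k br v (c :: w)))
        + consF k c (liftTwo k (qsh k br) (sing k (a :: u)) (qsh k br (b :: v) w))
        + oconsF k (br a c) (liftTwo k (qsh k br) (sing k u) (qsh k br (b :: v) w))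
        + oconsF k (br b c) (liftTwo k (qsh k br) (sing k (a :: u)) (qsh k br v w))
        + oconsF k ((br b c).bind (br a))
            (liftTwo k (qsh k br) (sing k u) (qsh k br v w)) := by
  conv_lhs => rw [qsh_cons_cons br b c v w]
  rw [liftTwo_add_right, liftTwo_add_right, L_consF_right, L_consF_right, L_oconsF_right]
  conv_rhs =>
    rw [qsh_cons_cons br b c v w, liftTwo_add_right, liftTwo_add_right, consF_add, consF_add]
  abel

lemma qsh_assoc_aux (br : A → A → Option A)
    (hassoc : ∀ a b c, (br a b).bind (fun x => br x c) = (br b c).bind (br a)) :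
    ∀ n : ℕ, ∀ w1 w2 w3 : List A, w1.length + w2.length + w3.length = n →
      liftTwo k (qsh k br) (qsh k br w1 w2) (sing k w3)
        = liftTwo k (qsh k br) (sing k w1) (qsh k br w2 w3) := by
  intro n
  induction n using Nat.strong_induction_on with
  | _ n ih =>
    intro w1 w2 w3 hn
    have IH : ∀ x1 x2 x3 : List A, x1.length + x2.length + x3.length < n →
        liftTwo k (qsh k br) (qsh k br x1 x2) (sing k x3)
          = liftTwo k (qsh k br) (sing k x1) (qsh k br x2 x3) :=
      fun x1 x2 x3 h => ih _ h x1 x2 x3 rfl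
    cases w1 with
    | nil =>
      rw [qsh_nil_left, liftTwo_sing_sing, liftTwo_sing_left]
      simp only [qsh_nil_left]
      rw [sum_smul_sing]
    | cons a u =>
      cases w2 with
      | nil => rw [qsh_nil_right, qsh_nil_left]
      | cons b v =>
        cases w3 with
        | nil =>
          rw [liftTwo_sing_right]
          simp only [qsh_nil_right]
          rw [sum_smul_sing, liftTwo_sing_sing]
        | cons c w =>
          subst hn
          have h1 := IH u (b :: v) (c :: w) (by simp only [List.length_cons]; omega)
          have h2 := IH (a :: u) v (c :: w) (by simp only [List.length_cons]; omega)
          have h3 := IH (a :: u) (b :: v) w (by simp only [List.length_cons]; omega)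
          have h4 := IH u v (c :: w) (by simp only [List.length_cons]; omega)
          have h5 := IH u (b :: v) w (by simp only [List.length_cons]; omega)
          have h6 := IH (a :: u) v w (by simp only [List.length_cons]; omega)
          have h7 := IH u v w (by simp only [List.length_cons]; omega)
          rw [L_qsh_sing_expand, L_sing_qsh_expand, h1, h2, h3, h4, h5, h6, h7, hassoc a b c]

end Assoc

/-- The quasi-shuffle product is associative:
`(w1 * w2) * w3 = w1 * (w2 * w3)` for all words, where the product of the linear
combination `w1 * w2` with the word `w3` is the bilinear extension of `*`. -/
theorem quasi_shuffle_assoc {A k : Type} [Field k] [CharZero k]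
    (deg : A → ℕ) (hpos : ∀ a, 0 < deg a)
    (br : A → A → Option A)
    (hcomm : ∀ a b, br a b = br b a)
    (hassoc : ∀ a b c, (br a b).bind (fun x => br x c) = (br b c).bind (br a))
    (hdeg : ∀ a b c, br a b = some c → deg c = deg a + deg b) :
    ∀ w1 w2 w3 : List A,
      liftTwo k (qsh k br) (qsh k br w1 w2) (sing k w3)
        = liftTwo k (qsh k br) (sing k w1) (qsh k br w2 w3) := by
  intro w1 w2 w3
  exact qsh_assoc_aux br hassoc _ w1 w2 w3 rfl
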